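/- For α ≥ κ ≥ 0 with α > κ, and all x, μ ∈ ℝ: ((α²−κ²)/(2α)) · exp(−α|x−μ| + κ(x−μ)) = ∫₀^∞ φ(x; μ + κν, ν) · ((α²−κ²)/2) · exp(−((α²−κ²)/2)·ν) dν, where φ(x; m, v) = (1/√(2πv)) exp(−(x−m)²/(2v)) is the normal density with mean m and variance v. -/

import Mathlib

open MeasureTheory Real Set

/-- Normal density with mean `m` and variance `v`. -/
noncomputable def normalPdf (x m v : ℝ) : ℝ :=
  (1 / Real.sqrt (2 * π * v)) * Real.exp (-(x - m) ^ 2 / (2 * v))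

lemma contOn_G (a b : ℝ) :
    ContinuousOn (fun u => Real.exp (-(b*u - a/u)^2)) (Ioi (0:ℝ)) := by
  apply Real.continuous_exp.comp_continuousOn
  apply ContinuousOn.neg
  apply ContinuousOn.pow
  exact (continuousOn_const.mul continuousOn_id).sub
    (continuousOn_const.div continuousOn_id (fun u hu => ne_of_gt hu))

lemma injOn_glasser (a b : ℝ) (ha : 0 ≤ a) (hb : 0 < b) :
    InjOn (fun u => b*u - a/u) (Ioi (0:ℝ)) := by
  apply StrictMonoOn.injOn
  intro u hu v hv huv
  simp only [mem_Ioi] at hu hv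
  have h1 : a / v ≤ a / u := div_le_div_of_nonneg_left ha hu huv.le
  have h2 : b*u < b*v := mul_lt_mul_of_pos_left huv hb
  simp only
  linarith

lemma integrable_G (a b : ℝ) (ha : 0 ≤ a) (hb : 0 < b) :
    IntegrableOn (fun u => Real.exp (-(b*u - a/u)^2)) (Ioi (0:ℝ)) := by
  have hg : Integrable (fun u : ℝ => Real.exp (-b^2 * u^2)) :=
    integrable_exp_neg_mul_sq (by positivity)
  refine ((hg.const_mul (Real.exp (2*a*b))).restrict (s := Ioi 0)).mono'
    ((contOn_G a b).aestronglyMeasurable measurableSet_Ioi) ?_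
  filter_upwards [ae_restrict_mem measurableSet_Ioi] with u hu
  simp only [mem_Ioi] at hu
  rw [Real.norm_eq_abs, abs_of_pos (Real.exp_pos _), ← Real.exp_add]
  apply Real.exp_le_exp.mpr
  have h3 : 0 ≤ a^2/u^2 := by positivity
  have : (b*u - a/u)^2 = b^2*u^2 - 2*a*b + a^2/u^2 := by
    field_simp; ring
  nlinarith

lemma image_glasser (a b : ℝ) (ha : 0 < a) (hb : 0 < b) :
    (fun u => b*u - a/u) '' Ioi (0:ℝ) = univ := by
  ext w
  simp only [mem_image, mem_univ, iff_true, mem_Ioi]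
  set s := Real.sqrt (w^2 + 4*a*b) with hs
  have hs2 : s^2 = w^2 + 4*a*b := Real.sq_sqrt (by positivity)
  have hsw : -w < s := by nlinarith [Real.sqrt_nonneg (w^2+4*a*b), abs_nonneg w, sq_abs w]
  have hws : 0 < w + s := by linarith
  refine ⟨(w + s)/(2*b), by positivity, ?_⟩
  field_simp
  nlinarith

lemma image_inv_scaled (a b : ℝ) (ha : 0 < a) (hb : 0 < b) :
    (fun v => a/(b*v)) '' Ioi (0:ℝ) = Ioi (0:ℝ) := by
  ext w
  simp only [mem_image, mem_Ioi]
  constructor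
  · rintro ⟨v, hv, rfl⟩; positivity
  · intro hw; exact ⟨a/(b*w), by positivity, by field_simp⟩

lemma claimC (a b : ℝ) (ha : 0 < a) (hb : 0 < b) :
    ∫ u in Ioi (0:ℝ), (b + a/u^2) * Real.exp (-(b*u - a/u)^2) = Real.sqrt π := by
  have hderiv : ∀ u ∈ Ioi (0:ℝ), HasDerivWithinAt (fun u => b*u - a/u) (b + a/u^2) (Ioi 0) u := by
    intro u hu
    simp only [mem_Ioi] at hu
    have h1 : HasDerivAt (fun u : ℝ => b*u - a/u) (b - (-a/u^2)) u := by
      have := ((hasDerivAt_id u).const_mul b).sub ((hasDerivAt_inv (ne_of_gt hu)).const_mul a)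
      have e : (fun u : ℝ => b*u - a/u) = (fun y => b * id y) - fun y => a * y⁻¹ := by
        funext y; simp [div_eq_mul_inv]
      rw [e]; exact this.congr_deriv (by ring)
    exact h1.hasDerivWithinAt.congr_deriv (by ring)
  have := integral_image_eq_integral_abs_deriv_smul measurableSet_Ioi hderiv
    (injOn_glasser a b ha.le hb) (fun w => Real.exp (-w^2))
  rw [image_glasser a b ha hb, Measure.restrict_univ] at this
  have hgauss : ∫ w : ℝ, Real.exp (-w^2) = Real.sqrt π := by
    simpa using integral_gaussian 1
  rw [hgauss] at this
  rw [this]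
  apply setIntegral_congr_fun measurableSet_Ioi
  intro u hu
  simp only [mem_Ioi] at hu
  simp only [smul_eq_mul]; rw [abs_of_pos (by positivity : (0:ℝ) < b + a/u^2)]

lemma hderiv_inv_scaled (a b : ℝ) (ha : 0 < a) (hb : 0 < b) :
    ∀ v ∈ Ioi (0:ℝ), HasDerivWithinAt (fun v => a/(b*v)) (-(a/b)/v^2) (Ioi 0) v := by
  intro v hv
  simp only [mem_Ioi] at hv
  have h1 : HasDerivAt (fun v : ℝ => a/(b*v)) ((a/b) * (-1/v^2)) v := by
    have := (hasDerivAt_inv (ne_of_gt hv)).const_mul (a/b)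
    have e : (fun v : ℝ => a/(b*v)) = fun y => a/b * y⁻¹ := by funext y; ring
    rw [e]; exact this.congr_deriv (by ring)
  exact h1.hasDerivWithinAt.congr_deriv (by ring)

lemma injOn_inv_scaled (a b : ℝ) (ha : 0 < a) (hb : 0 < b) :
    InjOn (fun v => a/(b*v)) (Ioi (0:ℝ)) := by
  intro u hu v hv h
  simp only [mem_Ioi] at hu hv
  field_simp at h
  exact h.symm

lemma comp_inv_scaled (a b : ℝ) (ha : 0 < a) (hb : 0 < b) (v : ℝ) (hv : 0 < v) :
    b*(a/(b*v)) - a/(a/(b*v)) = -(b*v - a/v) := by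
  field_simp
  ring

lemma claimA (a b : ℝ) (ha : 0 < a) (hb : 0 < b) :
    ∫ u in Ioi (0:ℝ), (a/u^2) * Real.exp (-(b*u - a/u)^2)
      = ∫ u in Ioi (0:ℝ), b * Real.exp (-(b*u - a/u)^2) := by
  have := integral_image_eq_integral_abs_deriv_smul measurableSet_Ioi
    (hderiv_inv_scaled a b ha hb) (injOn_inv_scaled a b ha hb)
    (fun u => b * Real.exp (-(b*u - a/u)^2))
  rw [image_inv_scaled a b ha hb] at this
  rw [this]
  apply setIntegral_congr_fun measurableSet_Ioi
  intro v hv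
  simp only [mem_Ioi] at hv
  simp only [smul_eq_mul]
  rw [comp_inv_scaled a b ha hb v hv, show -(a/b)/v^2 = -((a/b)/v^2) by ring,
    abs_neg, abs_of_pos (by positivity : (0:ℝ) < (a/b)/v^2)]
  rw [show (-(b*v - a/v))^2 = (b*v - a/v)^2 by ring]
  field_simp

lemma integrableA (a b : ℝ) (ha : 0 < a) (hb : 0 < b) :
    IntegrableOn (fun u => (a/u^2) * Real.exp (-(b*u - a/u)^2)) (Ioi (0:ℝ)) := by
  have := (integrableOn_image_iff_integrableOn_abs_deriv_smul measurableSet_Ioi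
    (hderiv_inv_scaled a b ha hb) (injOn_inv_scaled a b ha hb)
    (fun u => b * Real.exp (-(b*u - a/u)^2))).mp ?_
  · apply (this.congr_fun ?_ measurableSet_Ioi)
    intro v hv
    simp only [mem_Ioi] at hv
    simp only [smul_eq_mul]
    rw [comp_inv_scaled a b ha hb v hv, show -(a/b)/v^2 = -((a/b)/v^2) by ring,
      abs_neg, abs_of_pos (by positivity : (0:ℝ) < (a/b)/v^2)]
    rw [show (-(b*v - a/v))^2 = (b*v - a/v)^2 by ring]
    field_simp
  · rw [image_inv_scaled a b ha hb]
    exact (integrable_G a b ha.le hb).const_mul b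

lemma glasser (a b : ℝ) (ha : 0 ≤ a) (hb : 0 < b) :
    ∫ u in Ioi (0:ℝ), Real.exp (-(a^2/u^2) - b^2*u^2)
      = Real.sqrt π / (2*b) * Real.exp (-(2*a*b)) := by
  rcases eq_or_lt_of_le ha with rfl|ha
  · simp only [ne_eq, zero_pow, zero_div, zero_add, mul_zero, zero_mul, neg_zero,
      Real.exp_zero, mul_one]
    have : ∀ u : ℝ, Real.exp (-(0^2/u^2) - b^2*u^2) = Real.exp (-b^2 * u^2) := by
      intro u; norm_num
    simp_rw [this]
    rw [integral_gaussian_Ioi (b^2)]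
    rw [show π / b^2 = (Real.sqrt π / b)^2 * 1 by
      rw [div_pow, Real.sq_sqrt Real.pi_nonneg]; ring]
    rw [mul_one, Real.sqrt_sq (by positivity)]
    ring
  · have hbG : IntegrableOn (fun u => b * Real.exp (-(b*u - a/u)^2)) (Ioi (0:ℝ)) :=
      (integrable_G a b ha.le hb).const_mul b
    have key : ∫ u in Ioi (0:ℝ), b * Real.exp (-(b*u - a/u)^2) = Real.sqrt π / 2 := by
      have hadd : ∫ u in Ioi (0:ℝ), (b + a/u^2) * Real.exp (-(b*u - a/u)^2)
          = (∫ u in Ioi (0:ℝ), b * Real.exp (-(b*u - a/u)^2))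
            + ∫ u in Ioi (0:ℝ), (a/u^2) * Real.exp (-(b*u - a/u)^2) := by
        rw [← integral_add hbG (integrableA a b ha hb)]
        congr 1; ext u; ring
      rw [claimA a b ha hb] at hadd
      rw [claimC a b ha hb] at hadd
      linarith
    rw [integral_const_mul] at key
    have hG : ∫ u in Ioi (0:ℝ), Real.exp (-(b*u - a/u)^2) = Real.sqrt π / (2*b) := by
      field_simp at key ⊢
      linarith
    calc ∫ u in Ioi (0:ℝ), Real.exp (-(a^2/u^2) - b^2*u^2)
        = ∫ u in Ioi (0:ℝ), Real.exp (-(2*a*b)) * Real.exp (-(b*u - a/u)^2) := by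
          apply setIntegral_congr_fun measurableSet_Ioi
          intro u hu
          simp only [mem_Ioi] at hu
          simp only
          rw [← Real.exp_add]
          congr 1
          field_simp
          ring
      _ = Real.sqrt π / (2*b) * Real.exp (-(2*a*b)) := by
          rw [integral_const_mul, hG]; ring

lemma gig (a b : ℝ) (ha : 0 ≤ a) (hb : 0 < b) :
    ∫ ν in Ioi (0:ℝ), (1/Real.sqrt ν) * Real.exp (-(a^2/(2*ν)) - b^2*ν/2)
      = Real.sqrt (2*π) / b * Real.exp (-(a*b)) := by
  have himg : (fun u : ℝ => u^2) '' Ioi 0 = Ioi 0 := by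
    ext w
    simp only [mem_image, mem_Ioi]
    constructor
    · rintro ⟨u, hu, rfl⟩; positivity
    · intro hw; exact ⟨Real.sqrt w, Real.sqrt_pos.mpr hw, Real.sq_sqrt hw.le⟩
  have hderiv : ∀ u ∈ Ioi (0:ℝ), HasDerivWithinAt (fun u : ℝ => u^2) (2*u) (Ioi 0) u := by
    intro u hu
    simpa using (hasDerivAt_pow 2 u).hasDerivWithinAt
  have hinj : InjOn (fun u : ℝ => u^2) (Ioi 0) := by
    intro u hu v hv h
    simp only [mem_Ioi] at hu hv
    simp only at h
    have h2 : Real.sqrt (u^2) = Real.sqrt (v^2) := by rw [h]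
    rwa [Real.sqrt_sq hu.le, Real.sqrt_sq hv.le] at h2
  have := integral_image_eq_integral_abs_deriv_smul measurableSet_Ioi hderiv hinj
    (fun ν => (1/Real.sqrt ν) * Real.exp (-(a^2/(2*ν)) - b^2*ν/2))
  rw [himg] at this
  rw [this]
  have hpt : ∀ u ∈ Ioi (0:ℝ),
      |2*u| • ((1/Real.sqrt (u^2)) * Real.exp (-(a^2/(2*u^2)) - b^2*u^2/2))
        = 2 * Real.exp (-((a/Real.sqrt 2)^2/u^2) - (b/Real.sqrt 2)^2*u^2) := by
    intro u hu
    simp only [mem_Ioi] at hu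
    rw [smul_eq_mul, Real.sqrt_sq hu.le, abs_of_pos (by positivity)]
    rw [div_pow, div_pow, Real.sq_sqrt (by norm_num : (0:ℝ) ≤ 2)]
    rw [show a^2/2/u^2 = a^2/(2*u^2) by ring, show b^2/2*u^2 = b^2*u^2/2 by ring]
    field_simp
  rw [setIntegral_congr_fun measurableSet_Ioi hpt, integral_const_mul,
    glasser (a/Real.sqrt 2) (b/Real.sqrt 2) (by positivity) (by positivity)]
  have hs2 : Real.sqrt 2 > 0 := by positivity
  have h2 : (2:ℝ) * (a/Real.sqrt 2) * (b/Real.sqrt 2) = a * b := by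
    have : Real.sqrt 2 * Real.sqrt 2 = 2 := Real.mul_self_sqrt (by norm_num)
    field_simp
    nlinarith
  rw [h2, Real.sqrt_mul (by norm_num : (0:ℝ) ≤ 2)]
  field_simp

theorem asymmetric_laplace_mixture (α κ x μ : ℝ) (hκ : 0 ≤ κ) (h : κ < α) :
    ((α ^ 2 - κ ^ 2) / (2 * α)) * Real.exp (-α * |x - μ| + κ * (x - μ))
      = ∫ ν in Ioi (0 : ℝ),
          normalPdf x (μ + κ * ν) ν *
            (((α ^ 2 - κ ^ 2) / 2) * Real.exp (-((α ^ 2 - κ ^ 2) / 2) * ν)) := by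
  have hα : 0 < α := lt_of_le_of_lt hκ h
  set y := x - μ with hy
  set lam := (α^2 - κ^2)/2 with hlam
  have hlam0 : 0 < lam := by
    have : κ^2 < α^2 := by nlinarith
    rw [hlam]; linarith
  have hpt : ∀ ν ∈ Ioi (0:ℝ),
      normalPdf x (μ + κ * ν) ν * (lam * Real.exp (-lam * ν))
        = (lam * Real.exp (κ*y) / Real.sqrt (2*π))
            * ((1/Real.sqrt ν) * Real.exp (-(|y|^2/(2*ν)) - α^2*ν/2)) := by
    intro ν hν
    simp only [mem_Ioi] at hν
    rw [normalPdf]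
    have hxm : x - (μ + κ * ν) = y - κ * ν := by rw [hy]; ring
    rw [hxm]
    rw [show (2*π*ν : ℝ) = (2*π) * ν by ring,
      Real.sqrt_mul (by positivity : (0:ℝ) ≤ 2*π)]
    rw [sq_abs]
    have hexp : -(y - κ*ν)^2/(2*ν) + -lam*ν = κ*y + (-(y^2/(2*ν)) - α^2*ν/2) := by
      rw [hlam]
      field_simp
      ring
    have e1 : Real.exp (-(y - κ*ν)^2/(2*ν)) * Real.exp (-lam*ν)
        = Real.exp (κ*y) * Real.exp (-(y^2/(2*ν)) - α^2*ν/2) := by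
      rw [← Real.exp_add, ← Real.exp_add, hexp]
    have hsν : Real.sqrt ν > 0 := Real.sqrt_pos.mpr hν
    have hs2π : Real.sqrt (2*π) > 0 := Real.sqrt_pos.mpr (by positivity)
    calc 1 / (Real.sqrt (2*π) * Real.sqrt ν) * Real.exp (-(y - κ*ν)^2/(2*ν))
          * (lam * Real.exp (-lam*ν))
        = lam * (Real.exp (-(y - κ*ν)^2/(2*ν)) * Real.exp (-lam*ν))
            / (Real.sqrt (2*π) * Real.sqrt ν) := by ring
      _ = lam * (Real.exp (κ*y) * Real.exp (-(y^2/(2*ν)) - α^2*ν/2))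
            / (Real.sqrt (2*π) * Real.sqrt ν) := by rw [e1]
      _ = (lam * Real.exp (κ*y) / Real.sqrt (2*π))
            * ((1/Real.sqrt ν) * Real.exp (-(y^2/(2*ν)) - α^2*ν/2)) := by
          field_simp
  rw [setIntegral_congr_fun measurableSet_Ioi hpt, integral_const_mul,
    gig (|y|) α (abs_nonneg y) hα]
  have hs2π : Real.sqrt (2*π) > 0 := Real.sqrt_pos.mpr (by positivity)
  rw [show -α * (|y|) + κ * y = κ*y + -((|y|)*α) by ring, Real.exp_add]
  field_simp
  ring
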